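/- For every a > 0, the derivative of the Hurwitz zeta function at s = 0 satisfies ∂ζ/∂s(0, a) = log Γ(a) − (1/2) log(2π) (Lerch's formula). -/

import Mathlib

open Complex MeasureTheory Set Filter Topology intervalIntegral Metric
open scoped Interval

noncomputable section

namespace LerchAux

def Qf (t : ℝ) : ℝ := (Int.fract t ^ 2 - Int.fract t) / 2
def pf (b : ℝ) (c : ℂ) (x : ℝ) : ℂ := Complex.exp (c * (Real.log (x + b) : ℝ))
def Kf (b : ℝ) (s : ℂ) : ℂ := ∫ x in Ioi (0:ℝ), (Qf x : ℂ) * pf b (-s - 2) x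
def Ef (b : ℝ) (s : ℂ) : ℂ := pf b (1 - s) 0 / (s - 1) + pf b (-s) 0 / 2 - s * (s + 1) * Kf b s
def Rf (b : ℝ) : ℝ := ∫ x in Ioi (0:ℝ), Qf x * Real.exp (-2 * Real.log (x + b))
def fpoly (b : ℝ) (n : ℕ) (s : ℂ) (x : ℝ) : ℂ :=
  pf b (-s) x - ((((x - n) ^ 2 - (x - n)) / 2 : ℝ) : ℂ) * (s * (s + 1) * pf b (-s - 2) x)
def fful (b : ℝ) (s : ℂ) (x : ℝ) : ℂ :=
  pf b (-s) x - (Qf x : ℂ) * (s * (s + 1) * pf b (-s - 2) x)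
def V : Set ℂ := {s : ℂ | -(1/2 : ℝ) < s.re ∧ s ≠ 1}

lemma re_neg_sub_two (s : ℂ) : (-s - 2).re = -s.re - 2 := by simp

lemma abs_Qf_le (t : ℝ) : |Qf t| ≤ 8⁻¹ := by
  have h1 : 0 ≤ Int.fract t := Int.fract_nonneg t
  have h2 : Int.fract t < 1 := Int.fract_lt_one t
  rw [abs_le]
  constructor <;> [skip; skip] <;> unfold Qf <;> nlinarith [sq_nonneg (2 * Int.fract t - 1)]

lemma norm_pf (b : ℝ) (c : ℂ) (x : ℝ) : ‖pf b c x‖ = Real.exp (c.re * Real.log (x + b)) := by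
  rw [pf, Complex.norm_exp]
  norm_num [Complex.mul_re]

lemma norm_pf_eq_rpow {b x : ℝ} (h : 0 < x + b) (c : ℂ) :
    ‖pf b c x‖ = (x + b) ^ c.re := by
  rw [norm_pf, Real.rpow_def_of_pos h, mul_comm]

lemma hasDerivAt_pf {b x : ℝ} (h : 0 < x + b) (c : ℂ) :
    HasDerivAt (pf b c) (c * pf b (c - 1) x) x := by
  have hlog : HasDerivAt (fun y : ℝ => Real.log (y + b)) (1 / (x + b)) x := by
    simpa [Function.comp_def] using ((Real.hasDerivAt_log h.ne').comp x ((hasDerivAt_id x).add_const b))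
  have hlogC : HasDerivAt (fun y : ℝ => ((Real.log (y + b) : ℝ) : ℂ)) ((1 / (x + b) : ℝ) : ℂ) x :=
    hlog.ofReal_comp
  have := (hlogC.const_mul c).cexp
  convert this using 1
  case e'_8 => rfl
  simp only [pf]
  have hx : ((x + b : ℝ) : ℂ) ≠ 0 := by
    simpa using (Complex.ofReal_ne_zero.mpr h.ne')
  rw [sub_one_mul, Complex.exp_sub]
  have : Complex.exp ((Real.log (x + b) : ℂ)) = ((x + b : ℝ) : ℂ) := by
    rw [← Complex.ofReal_exp, Real.exp_log h]
  rw [this]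
  push_cast
  field_simp

lemma measurable_pf (b : ℝ) (c : ℂ) : Measurable (pf b c) := by
  unfold pf
  exact Complex.measurable_exp.comp
    ((Complex.measurable_ofReal.comp (Real.measurable_log.comp (measurable_id.add_const b))).const_mul c)

lemma measurable_Qf : Measurable Qf := by
  unfold Qf
  exact ((measurable_fract.pow_const 2).sub measurable_fract).div_const 2

lemma integrableOn_rpow_shift {b : ℝ} (hb : 0 < b) {r : ℝ} (hr : r < -1) :
    IntegrableOn (fun x : ℝ => (x + b) ^ r) (Ioi (0:ℝ)) := by
  have hcont : ∀ {t : Set ℝ}, t ⊆ Ioi (-b) → ContinuousOn (fun x : ℝ => (x + b) ^ r) t := by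
    intro t ht
    apply ContinuousOn.rpow_const
    · exact (continuous_id.add continuous_const).continuousOn
    · intro x hx
      left
      have := ht hx
      simp only [mem_Ioi] at this
      linarith
  have h1 : IntegrableOn (fun x : ℝ => (x + b) ^ r) (Ioc (0:ℝ) 1) := by
    apply (hcont ?_).integrableOn_Icc.mono_set Ioc_subset_Icc_self
    intro x hx
    simp only [mem_Icc, mem_Ioi] at *
    linarith [hx.1]
  have h2 : IntegrableOn (fun x : ℝ => (x + b) ^ r) (Ioi (1:ℝ)) := by
    refine Integrable.mono' (integrableOn_Ioi_rpow_of_lt hr one_pos) ?_ ?_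
    · exact (hcont (fun x hx => by simp only [mem_Ioi] at *; linarith)).aestronglyMeasurable
        measurableSet_Ioi
    · refine (ae_restrict_iff' measurableSet_Ioi).mpr (.of_forall fun x hx => ?_)
      simp only [mem_Ioi] at hx
      have hx0 : (0:ℝ) < x := by linarith
      rw [Real.norm_eq_abs, _root_.abs_of_nonneg (Real.rpow_nonneg (by linarith) r)]
      exact Real.rpow_le_rpow_of_nonpos hx0 (by linarith) (by linarith)
  simpa [Ioc_union_Ioi_eq_Ioi (zero_le_one)] using h1.union h2

lemma integrableOn_Qf_pf {b : ℝ} (hb : 0 < b) {c : ℂ} (hc : c.re < -1) :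
    IntegrableOn (fun x => (Qf x : ℂ) * pf b c x) (Ioi (0:ℝ)) := by
  refine Integrable.mono' ((integrableOn_rpow_shift hb hc).const_mul 8⁻¹) ?_ ?_
  · exact ((Complex.measurable_ofReal.comp measurable_Qf).mul (measurable_pf b c)).aestronglyMeasurable
  · refine (ae_restrict_iff' measurableSet_Ioi).mpr (.of_forall fun x hx => ?_)
    simp only [mem_Ioi] at hx
    have hxb : 0 < x + b := by linarith
    rw [norm_mul, Complex.norm_real, norm_pf_eq_rpow hxb, Real.norm_eq_abs]
    exact mul_le_mul_of_nonneg_right (abs_Qf_le x) (Real.rpow_nonneg hxb.le _)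

lemma hasDerivAt_G {b : ℝ} (n : ℕ) (s : ℂ) {x : ℝ} (h : 0 < x + b) :
    HasDerivAt (fun x : ℝ =>
      (((x - n - 1/2 : ℝ)) : ℂ) * pf b (-s) x
        - ((((x - n) ^ 2 - (x - n)) / 2 : ℝ) : ℂ) * (-s * pf b (-s - 1) x))
      (fpoly b n s x) x := by
  have hA : HasDerivAt (fun x : ℝ => ((x - n - 1/2 : ℝ) : ℂ)) 1 x := by
    have : HasDerivAt (fun x : ℝ => (x - n - 1/2 : ℝ)) 1 x :=
      ((hasDerivAt_id x).sub_const _).sub_const _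
    simpa using this.ofReal_comp
  have hQ : HasDerivAt (fun x : ℝ => ((((x - n) ^ 2 - (x - n)) / 2 : ℝ) : ℂ))
      (((x - n - 1/2 : ℝ)) : ℂ) x := by
    have : HasDerivAt (fun x : ℝ => (((x - n) ^ 2 - (x - n)) / 2 : ℝ))
        ((2 * (x - n) ^ 1 * 1 - 1) / 2) x := by
      exact ((((hasDerivAt_id x).sub_const (n:ℝ)).pow 2).sub
        ((hasDerivAt_id x).sub_const (n:ℝ))).div_const 2
    have h2 : ((2 * (x - n) ^ 1 * 1 - 1) / 2 : ℝ) = x - n - 1/2 := by ring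
    rw [h2] at this
    simpa using this.ofReal_comp
  have h1 := hA.mul (hasDerivAt_pf h (-s))
  have h2 := hQ.mul ((hasDerivAt_pf h (-s - 1)).const_mul (-s))
  convert h1.sub h2 using 1
  case e'_4 => rfl
  case e'_8 => rfl
  rw [fpoly]
  have e1 : -s - 1 - 1 = -s - 2 := by ring
  rw [e1]
  ring

lemma intervalIntegrable_fpoly {b : ℝ} (hb : 0 < b) (n : ℕ) (s : ℂ) :
    IntervalIntegrable (fpoly b n s) volume n (n + 1) := by
  apply ContinuousOn.intervalIntegrable
  have hpf : ∀ c : ℂ, ContinuousOn (pf b c) (uIcc (n : ℝ) (n + 1)) := by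
    intro c x hx
    have hx' : 0 < x + b := by
      rcases hx with ⟨h1, _⟩
      simp only [inf_le_iff] at h1
      have : (0:ℝ) ≤ x := by
        rcases h1 with h | h
        · exact le_trans (Nat.cast_nonneg n) h
        · nlinarith [Nat.cast_nonneg (α := ℝ) n]
      linarith
    exact (hasDerivAt_pf hx' c).continuousAt.continuousWithinAt
  apply ContinuousOn.sub (hpf _)
  apply ContinuousOn.mul
  · apply Continuous.continuousOn
    continuity
  · exact (continuousOn_const.mul (hpf _))

lemma integral_fpoly {b : ℝ} (hb : 0 < b) (n : ℕ) (s : ℂ) :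
    ∫ x in (n : ℝ)..(n + 1 : ℝ), fpoly b n s x
      = (pf b (-s) (n + 1) + pf b (-s) n) / 2 := by
  have key := intervalIntegral.integral_eq_sub_of_hasDerivAt
    (f := fun x : ℝ =>
      (((x - n - 1/2 : ℝ)) : ℂ) * pf b (-s) x
        - ((((x - n) ^ 2 - (x - n)) / 2 : ℝ) : ℂ) * (-s * pf b (-s - 1) x))
    (f' := fpoly b n s) (a := (n : ℝ)) (b := (n + 1 : ℝ))
    (fun x hx => by
      refine hasDerivAt_G n s ?_
      rcases hx with ⟨h1, _⟩
      simp only [inf_le_iff] at h1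
      have : (0:ℝ) ≤ x := by
        rcases h1 with h | h
        · exact le_trans (Nat.cast_nonneg n) h
        · nlinarith [Nat.cast_nonneg (α := ℝ) n]
      linarith)
    (intervalIntegrable_fpoly hb n s)
  rw [key]
  norm_num
  ring

lemma fful_eq_ae (b : ℝ) (s : ℂ) (n : ℕ) :
    fful b s =ᵐ[volume.restrict (Ι (n : ℝ) (n + 1))] fpoly b n s := by
  have h1 : ∀ᵐ x : ℝ ∂(volume.restrict (Ι (n : ℝ) (n + 1))), x ≠ (n : ℝ) + 1 := by
    refine ae_restrict_of_ae ?_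
    rw [ae_iff]
    have : {x : ℝ | ¬ x ≠ (n:ℝ) + 1} = {(n:ℝ) + 1} := by ext x; simp
    rw [this]
    exact Real.volume_singleton
  have h2 : ∀ᵐ x : ℝ ∂(volume.restrict (Ι (n : ℝ) (n + 1))), x ∈ Ι (n : ℝ) (n + 1) :=
    ae_restrict_mem measurableSet_uIoc
  filter_upwards [h1, h2] with x hx1 hx2
  rw [uIoc_of_le (by linarith : (n:ℝ) ≤ n + 1)] at hx2
  rcases hx2 with ⟨hl, hr⟩
  have hr' : x < (n : ℝ) + 1 := lt_of_le_of_ne hr hx1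
  have hfr : Int.fract x = x - n := by
    have : ⌊x⌋ = (n : ℤ) := by
      rw [Int.floor_eq_iff]
      constructor
      · push_cast; linarith
      · push_cast; linarith
    rw [Int.fract, this]
    norm_num
  simp only [fful, fpoly, Qf, hfr]

lemma intervalIntegrable_fful {b : ℝ} (hb : 0 < b) (s : ℂ) (n : ℕ) :
    IntervalIntegrable (fful b s) volume n (n + 1) :=
  (intervalIntegrable_fpoly hb n s).congr_ae (fful_eq_ae b s n).symm

lemma integral_fful {b : ℝ} (hb : 0 < b) (s : ℂ) (n : ℕ) :
    ∫ x in (n : ℝ)..(n + 1 : ℝ), fful b s x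
      = (pf b (-s) (n + 1) + pf b (-s) n) / 2 := by
  rw [← integral_fpoly hb n s]
  refine intervalIntegral.integral_congr_ae ?_
  have h1 : ∀ᵐ x : ℝ, x ≠ (n : ℝ) + 1 := by
    rw [ae_iff]
    have : {x : ℝ | ¬ x ≠ (n:ℝ) + 1} = {(n:ℝ) + 1} := by ext x; simp
    rw [this]
    exact Real.volume_singleton
  filter_upwards [h1] with x hx1 hx2
  rw [uIoc_of_le (by linarith : (n:ℝ) ≤ n + 1)] at hx2
  rcases hx2 with ⟨hl, hr⟩
  have hr' : x < (n : ℝ) + 1 := lt_of_le_of_ne hr hx1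
  have hfr : Int.fract x = x - n := by
    have : ⌊x⌋ = (n : ℤ) := by
      rw [Int.floor_eq_iff]
      constructor
      · push_cast; linarith
      · push_cast; linarith
    rw [Int.fract, this]
    norm_num
  simp only [fful, fpoly, Qf, hfr]

lemma sum_pf_eq {b : ℝ} (hb : 0 < b) (s : ℂ) (N : ℕ) :
    ∑ k ∈ Finset.range N, pf b (-s) k
      = (∫ x in (0 : ℝ)..(N : ℝ), fful b s x) - (pf b (-s) N - pf b (-s) 0) / 2 := by
  have hadj := intervalIntegral.sum_integral_adjacent_intervals
    (a := fun k : ℕ => (k : ℝ)) (n := N) (f := fful b s) (μ := volume)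
    (fun k _ => by
      have := intervalIntegrable_fful hb s k
      convert this using 2
      push_cast; ring)
  simp only [Nat.cast_zero] at hadj
  have hval : ∀ k : ℕ, (∫ x in ((k:ℝ))..((k+1 : ℕ) : ℝ), fful b s x)
      = pf b (-s) k + (pf b (-s) (k + 1) - pf b (-s) k) / 2 := by
    intro k
    rw [show (((k+1 : ℕ)) : ℝ) = (k : ℝ) + 1 by push_cast; ring, integral_fful hb s k]
    ring
  rw [← hadj, Finset.sum_congr rfl (fun k _ => hval k), Finset.sum_add_distrib]
  rw [← Finset.sum_div]
  have htel : ∑ i ∈ Finset.range N, (pf b (-s) ((i:ℝ) + 1) - pf b (-s) (i:ℝ))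
      = pf b (-s) (N:ℝ) - pf b (-s) ((0:ℕ):ℝ) := by
    have := Finset.sum_range_sub (f := fun k : ℕ => pf b (-s) (k:ℝ)) N
    simpa [Nat.cast_add, Nat.cast_one] using this
  rw [htel]
  push_cast
  ring

lemma continuousOn_pf (b : ℝ) (c : ℂ) : ContinuousOn (pf b c) {x : ℝ | 0 < x + b} :=
  fun _ hx => (hasDerivAt_pf hx c).continuousAt.continuousWithinAt

lemma tendsto_pf_zero {b : ℝ} (hb : 0 < b) {c : ℂ} (hc : c.re < 0) :
    Tendsto (fun N : ℕ => pf b c N) atTop (𝓝 0) := by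
  apply squeeze_zero_norm (fun N => le_of_eq (norm_pf_eq_rpow (by positivity) c))
  have h1 : Tendsto (fun N : ℕ => (N : ℝ) + b) atTop atTop :=
    tendsto_atTop_add_const_right _ b tendsto_natCast_atTop_atTop
  have h2 : Tendsto (fun x : ℝ => x ^ c.re) atTop (𝓝 0) := by
    have := tendsto_rpow_neg_atTop (y := -c.re) (by linarith)
    simpa using this
  exact h2.comp h1

lemma intervalIntegrable_pf {b : ℝ} (hb : 0 < b) (c : ℂ) (N : ℕ) :
    IntervalIntegrable (pf b c) volume 0 N := by
  apply ContinuousOn.intervalIntegrable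
  apply (continuousOn_pf b c).mono
  intro x hx
  rcases hx with ⟨h1, _⟩
  simp only [inf_le_iff] at h1
  have : (0:ℝ) ≤ x := by
    rcases h1 with h | h
    · exact h
    · exact le_trans (Nat.cast_nonneg N) h
  simp only [mem_setOf_eq]; linarith

lemma intervalIntegrable_Qfpart {b : ℝ} (hb : 0 < b) {s : ℂ} (hs : -1 < s.re) (N : ℕ) :
    IntervalIntegrable (fun x => (Qf x : ℂ) * (s * (s + 1) * pf b (-s - 2) x)) volume 0 N := by
  rw [intervalIntegrable_iff]
  have h : IntegrableOn (fun x => s * (s + 1) * ((Qf x : ℂ) * pf b (-s-2) x)) (Ioi (0:ℝ)) := by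
    exact (integrableOn_Qf_pf hb (by rw [re_neg_sub_two]; linarith)).const_mul _
  refine (h.mono_set ?_).congr_fun (fun x _ => by ring) measurableSet_uIoc
  rw [uIoc_of_le (by positivity : (0:ℝ) ≤ N)]
  exact Ioc_subset_Ioi_self

lemma integral_pf_eq {b : ℝ} (hb : 0 < b) {s : ℂ} (hs : s ≠ 1) (N : ℕ) :
    ∫ x in (0:ℝ)..(N:ℝ), pf b (-s) x = (pf b (1 - s) N - pf b (1 - s) 0) / (1 - s) := by
  have h1s : (1 : ℂ) - s ≠ 0 := by
    intro h; apply hs; linear_combination -h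
  have key := intervalIntegral.integral_eq_sub_of_hasDerivAt
    (f := fun x : ℝ => pf b (1 - s) x / (1 - s)) (f' := pf b (-s)) (a := (0:ℝ)) (b := (N:ℝ))
    (fun x hx => by
      have hx' : 0 < x + b := by
        rcases hx with ⟨h1, _⟩
        simp only [inf_le_iff] at h1
        have : (0:ℝ) ≤ x := by
          rcases h1 with h | h
          · exact h
          · exact le_trans (Nat.cast_nonneg N) h
        linarith
      have := (hasDerivAt_pf hx' (1 - s)).div_const (1 - s)
      have e : (1 - s - 1) = -s := by ring
      rw [e] at this
      convert this using 1
      case e'_4 => rfl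
      field_simp)
    (intervalIntegrable_pf hb (-s) N)
  rw [key]
  ring

theorem hasSum_pf_Ef {b : ℝ} (hb : 0 < b) {s : ℂ} (hs : 1 < s.re) :
    HasSum (fun n : ℕ => pf b (-s) n) (Ef b s) := by
  have hsne : s ≠ 1 := by intro h; rw [h] at hs; simp at hs
  -- summability
  have hsum : Summable (fun n : ℕ => pf b (-s) n) := by
    apply Summable.of_norm
    rw [← summable_nat_add_iff 1]
    have hcomp : Summable (fun n : ℕ => ((n + 1 : ℝ)) ^ (-s.re)) := by
      have := (Real.summable_nat_rpow_inv (p := s.re)).mpr hs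
      rw [← summable_nat_add_iff 1] at this
      apply this.congr
      intro n
      push_cast
      rw [Real.rpow_neg (by positivity)]
    apply hcomp.of_nonneg_of_le (fun n => norm_nonneg _)
    intro n
    rw [norm_pf_eq_rpow (by positivity) (-s)]
    simp only [neg_re]
    apply Real.rpow_le_rpow_of_nonpos (by positivity) (by push_cast; linarith) (by linarith)
  -- limit of partial sums
  have hlim : Tendsto (fun N : ℕ => ∑ k ∈ Finset.range N, pf b (-s) k) atTop (𝓝 (Ef b s)) := by
    have heq : ∀ N : ℕ, ∑ k ∈ Finset.range N, pf b (-s) k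
        = (∫ x in (0:ℝ)..(N:ℝ), pf b (-s) x)
          - (∫ x in (0:ℝ)..(N:ℝ), (Qf x : ℂ) * (s * (s + 1) * pf b (-s - 2) x))
          - (pf b (-s) N - pf b (-s) 0) / 2 := by
      intro N
      rw [sum_pf_eq hb s N]
      congr 1
      rw [← intervalIntegral.integral_sub (intervalIntegrable_pf hb (-s) N)
        (intervalIntegrable_Qfpart hb (by linarith) N)]
      rfl
    simp only [heq]
    have hT1 : Tendsto (fun N : ℕ => ∫ x in (0:ℝ)..(N:ℝ), pf b (-s) x) atTop
        (𝓝 (pf b (1 - s) 0 / (s - 1))) := by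
      simp only [fun N : ℕ => integral_pf_eq hb hsne N]
      have h0 : Tendsto (fun N : ℕ => pf b (1 - s) N) atTop (𝓝 0) :=
        tendsto_pf_zero hb (by simp only [sub_re, one_re]; linarith)
      have h1s : (1:ℂ) - s ≠ 0 := sub_ne_zero.mpr (fun h => hsne h.symm)
      have hs1 : s - 1 ≠ 0 := sub_ne_zero.mpr hsne
      have := (h0.sub_const (pf b (1 - s) 0)).div_const (1 - s)
      convert this using 2
      field_simp
      ring
    have hT2 : Tendsto (fun N : ℕ => ∫ x in (0:ℝ)..(N:ℝ),
        (Qf x : ℂ) * (s * (s + 1) * pf b (-s - 2) x)) atTop (𝓝 (s * (s + 1) * Kf b s)) := by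
      have hint : IntegrableOn (fun x => (Qf x : ℂ) * (s * (s + 1) * pf b (-s - 2) x))
          (Ioi (0:ℝ)) := by
        have : IntegrableOn (fun x => s * (s + 1) * ((Qf x : ℂ) * pf b (-s-2) x)) (Ioi (0:ℝ)) :=
          (integrableOn_Qf_pf hb (by rw [re_neg_sub_two]; linarith)).const_mul _
        exact this.congr_fun (fun x _ => by ring) measurableSet_Ioi
      have := intervalIntegral_tendsto_integral_Ioi (a := (0:ℝ))
        (f := fun x => (Qf x : ℂ) * (s * (s + 1) * pf b (-s - 2) x)) hint
        (tendsto_natCast_atTop_atTop (R := ℝ))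
      convert this using 2
      rw [Kf, ← MeasureTheory.integral_const_mul]
      congr 1; ext x; ring
    have hT3 : Tendsto (fun N : ℕ => (pf b (-s) N - pf b (-s) 0) / 2) atTop
        (𝓝 ((0 - pf b (-s) 0)/2)) := by
      exact ((tendsto_pf_zero hb (by simp only [neg_re]; linarith)).sub_const _).div_const 2
    have := (hT1.sub hT2).sub hT3
    convert this using 1
    rw [Ef]
    ring
  -- conclude
  have := hsum.hasSum
  have heq := tendsto_nhds_unique this.tendsto_sum_nat hlim
  rwa [heq] at this

/-- log bound : |log (x+b)| ≤ 8 (x+b)^(1/8) + |log b| for x ≥ 0, b > 0 -/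
lemma abs_log_le {b : ℝ} (hb : 0 < b) {x : ℝ} (hx : 0 ≤ x) :
    |Real.log (x + b)| ≤ 8 * (x + b) ^ (8⁻¹ : ℝ) + |Real.log b| := by
  rcases le_or_gt 1 (x + b) with h | h
  · have h0 : 0 ≤ Real.log (x + b) := Real.log_nonneg h
    rw [_root_.abs_of_nonneg h0]
    have := Real.log_le_rpow_div (le_trans (by norm_num) h : (0:ℝ) ≤ x + b)
      (by norm_num : (0:ℝ) < 8⁻¹)
    calc Real.log (x + b) ≤ (x + b) ^ (8⁻¹:ℝ) / 8⁻¹ := this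
      _ = 8 * (x + b) ^ (8⁻¹:ℝ) := by ring
      _ ≤ 8 * (x + b) ^ (8⁻¹:ℝ) + |Real.log b| := le_add_of_nonneg_right (abs_nonneg _)
  · have hxb : 0 < x + b := by linarith
    have h1 : Real.log b ≤ Real.log (x + b) := Real.log_le_log hb (by linarith)
    have h2 : Real.log (x + b) < 0 := Real.log_neg hxb h
    rw [abs_of_nonpos h2.le]
    have : -Real.log (x + b) ≤ -Real.log b := by linarith
    calc -Real.log (x + b) ≤ -Real.log b := this
      _ ≤ |Real.log b| := neg_le_abs _
      _ ≤ 8 * (x + b) ^ (8⁻¹:ℝ) + |Real.log b| := le_add_of_nonneg_left (by positivity)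

/-- generic two-exponent bound: for y > 0 and u ∈ [r₁, r₂], y^u ≤ y^r₁ + y^r₂ -/
lemma rpow_le_add {y u r₁ r₂ : ℝ} (hy : 0 < y) (h1 : r₁ ≤ u) (h2 : u ≤ r₂) :
    y ^ u ≤ y ^ r₁ + y ^ r₂ := by
  rcases le_or_gt 1 y with h | h
  · exact le_add_of_nonneg_of_le (by positivity) (Real.rpow_le_rpow_of_exponent_le h h2)
  · exact le_add_of_le_of_nonneg (Real.rpow_le_rpow_of_exponent_ge hy h.le h1) (by positivity)

lemma differentiableAt_Kf {b : ℝ} (hb : 0 < b) {s₀ : ℂ} (hs₀ : -(1/2 : ℝ) < s₀.re) :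
    DifferentiableAt ℂ (Kf b) s₀ := by
  set ε : ℝ := (2 * s₀.re + 1) / 4 with hε
  have hεpos : 0 < ε := by rw [hε]; linarith
  set r₁ : ℝ := -(s₀.re + ε) - 2 with hr₁
  set r₂ : ℝ := -(s₀.re - ε) - 2 with hr₂
  have hr₂lt : r₂ + 8⁻¹ < -1 := by
    rw [hr₂, hε]; linarith
  have hr₁lt : r₁ + 8⁻¹ < -1 := by
    rw [hr₁, hε]; linarith
  -- the dominating function
  set bound : ℝ → ℝ := fun x => 8⁻¹ * ((8 * (x + b) ^ (8⁻¹:ℝ) + |Real.log b|) *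
    ((x + b) ^ r₁ + (x + b) ^ r₂)) with hbound
  have key := hasDerivAt_integral_of_dominated_loc_of_deriv_le (μ := volume.restrict (Ioi (0:ℝ)))
    (F := fun s x => (Qf x : ℂ) * pf b (-s - 2) x)
    (F' := fun s x => (Qf x : ℂ) * (-(Real.log (x + b) : ℂ) * pf b (-s - 2) x))
    (x₀ := s₀) (bound := bound) (ball_mem_nhds s₀ hεpos)
    (Filter.Eventually.of_forall fun s =>
      ((Complex.measurable_ofReal.comp measurable_Qf).mul (measurable_pf b _)).aestronglyMeasurable)
    (integrableOn_Qf_pf hb (by rw [re_neg_sub_two]; linarith))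
    (((Complex.measurable_ofReal.comp measurable_Qf).mul
      ((Complex.measurable_ofReal.comp
        (Real.measurable_log.comp (measurable_id.add_const b))).neg.mul
          (measurable_pf b _))).aestronglyMeasurable)
    ?_ ?_ ?_
  · exact ⟨_, key.2⟩
  · -- bound
    refine (ae_restrict_iff' measurableSet_Ioi).mpr (.of_forall fun x hx => fun s hs => ?_)
    simp only [mem_Ioi] at hx
    have hxb : 0 < x + b := by linarith
    rw [norm_mul, norm_mul, Complex.norm_real, norm_neg, Complex.norm_real,
      norm_pf_eq_rpow hxb, Real.norm_eq_abs, Real.norm_eq_abs]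
    have hre : |s.re - s₀.re| < ε := by
      have := mem_ball_iff_norm.mp hs
      calc |s.re - s₀.re| = |(s - s₀).re| := by rw [Complex.sub_re]
        _ ≤ ‖s - s₀‖ := Complex.abs_re_le_norm _
        _ < ε := this
    rw [abs_lt] at hre
    have hexp : (-s - 2).re ∈ Icc r₁ r₂ := by
      rw [re_neg_sub_two, hr₁, hr₂]
      constructor <;> [linarith; linarith]
    have h1 : (x + b) ^ (-s - 2).re ≤ (x + b) ^ r₁ + (x + b) ^ r₂ :=
      rpow_le_add hxb hexp.1 hexp.2
    rw [hbound]
    apply mul_le_mul (abs_Qf_le x) ?_ (by positivity) (by norm_num)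
    exact mul_le_mul (abs_log_le hb hx.le) h1 (by positivity) (by positivity)
  · -- bound integrable
    rw [hbound]
    apply Integrable.const_mul
    have hg : IntegrableOn (fun x : ℝ => 8 * (x + b) ^ (8⁻¹ + r₁) + 8 * (x + b) ^ (8⁻¹ + r₂)
          + (|Real.log b| * (x + b) ^ r₁ + |Real.log b| * (x + b) ^ r₂)) (Ioi (0:ℝ)) := by
      apply Integrable.add
      · exact ((integrableOn_rpow_shift hb (by linarith)).const_mul 8).add
          ((integrableOn_rpow_shift hb (by linarith)).const_mul 8)
      · exact ((integrableOn_rpow_shift hb (by linarith)).const_mul _).add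
          ((integrableOn_rpow_shift hb (by linarith)).const_mul _)
    apply hg.congr
    refine (ae_restrict_iff' measurableSet_Ioi).mpr (.of_forall fun x hx => ?_)
    simp only [mem_Ioi] at hx
    have hxb : 0 < x + b := by linarith
    simp only []
    rw [Real.rpow_add hxb, Real.rpow_add hxb]
    ring
  · -- differentiability in s
    refine (ae_restrict_iff' measurableSet_Ioi).mpr (.of_forall fun x hx => fun s hs => ?_)
    simp only [mem_Ioi] at hx
    have hxb : 0 < x + b := by linarith
    have hlin : HasDerivAt (fun s : ℂ => (-s - 2) * (Real.log (x + b) : ℂ))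
        (-(Real.log (x + b) : ℂ)) s := by
      have h1 : HasDerivAt (fun s : ℂ => -s - 2) (-1) s := ((hasDerivAt_id s).neg).sub_const 2
      simpa using h1.mul_const ((Real.log (x + b) : ℂ))
    simp only [pf]
    convert hlin.cexp.const_mul ((Qf x : ℂ)) using 1
    case e'_4 => rfl
    ring

/-- differentiability of `Ef b` away from 1, re > -1/2 -/
lemma differentiableAt_Ef {b : ℝ} (hb : 0 < b) {s : ℂ} (hs : -(1/2 : ℝ) < s.re)
    (hs1 : s ≠ 1) : DifferentiableAt ℂ (Ef b) s := by
  have hL : ∀ u : ℂ → ℂ, DifferentiableAt ℂ u s →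
      DifferentiableAt ℂ (fun s => Complex.exp (u s * (Real.log (0 + b) : ℝ))) s :=
    fun u hu => (hu.mul_const _).cexp
  have h1 : DifferentiableAt ℂ (fun s : ℂ => pf b (1 - s) 0 / (s - 1)) s := by
    apply DifferentiableAt.div
    · exact hL _ ((differentiableAt_const 1).sub differentiableAt_id)
    · exact differentiableAt_id.sub_const 1
    · exact sub_ne_zero.mpr hs1
  have h2 : DifferentiableAt ℂ (fun s : ℂ => pf b (-s) 0 / 2) s :=
    (hL _ differentiableAt_id.neg).div_const 2
  have h3 : DifferentiableAt ℂ (fun s : ℂ => s * (s + 1) * Kf b s) s :=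
    (differentiableAt_id.mul (differentiableAt_id.add_const 1)).mul
      (differentiableAt_Kf hb hs)
  exact (h1.add h2).sub h3

lemma exp_log_b {b : ℝ} (hb : 0 < b) :
    Complex.exp ((Real.log (0 + b) : ℝ) : ℂ) = (b : ℂ) := by
  rw [← Complex.ofReal_exp]
  norm_num [Real.exp_log hb]

lemma hasDerivAt_Ef_zero {b : ℝ} (hb : 0 < b) :
    HasDerivAt (Ef b)
      (((b * Real.log b - b - Real.log b / 2 : ℝ) : ℂ) - Kf b 0) 0 := by
  set L : ℂ := ((Real.log (0 + b) : ℝ) : ℂ) with hLdef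
  have hexpL : Complex.exp L = (b : ℂ) := exp_log_b hb
  -- T1
  have hu : HasDerivAt (fun s : ℂ => Complex.exp ((1 - s) * L)) (-L * Complex.exp L) 0 := by
    have hlin : HasDerivAt (fun s : ℂ => (1 - s) * L) (-L) 0 :=
      (((hasDerivAt_const (0:ℂ) (1:ℂ)).sub (hasDerivAt_id 0)).mul_const L).congr_deriv
        (by ring)
    have := hlin.cexp
    simpa using this.congr_deriv (by ring)
  have h1 : HasDerivAt (fun s : ℂ => Complex.exp ((1 - s) * L) / (s - 1))
      ((b : ℂ) * L - b) 0 := by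
    have hv : HasDerivAt (fun s : ℂ => s - 1) 1 (0:ℂ) := (hasDerivAt_id 0).sub_const 1
    have := hu.div hv (by norm_num)
    apply this.congr_deriv
    rw [show ((1:ℂ) - 0) * L = L by ring, hexpL]
    norm_num
    ring
  -- T2
  have h2 : HasDerivAt (fun s : ℂ => Complex.exp ((-s) * L) / 2) (-L / 2) 0 := by
    have hlin : HasDerivAt (fun s : ℂ => (-s) * L) (-L) 0 :=
      ((hasDerivAt_id 0).neg.mul_const L).congr_deriv (by ring)
    have := hlin.cexp.div_const 2
    apply this.congr_deriv
    norm_num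
  -- T3
  have h3 : HasDerivAt (fun s : ℂ => s * (s + 1) * Kf b s) (Kf b 0) 0 := by
    have hq : HasDerivAt (fun s : ℂ => s * (s + 1)) 1 0 := by
      have := (hasDerivAt_id (0:ℂ)).mul ((hasDerivAt_id 0).add_const 1)
      apply this.congr_deriv
      norm_num
    have hK := (differentiableAt_Kf hb (by norm_num : -(1/2:ℝ) < (0:ℂ).re)).hasDerivAt
    have := hq.mul hK
    apply this.congr_deriv
    norm_num
  have total := (h1.add h2).sub h3
  have : Ef b = fun s : ℂ => Complex.exp ((1 - s) * L) / (s - 1)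
      + Complex.exp ((-s) * L) / 2 - s * (s + 1) * Kf b s := by
    funext s; rw [Ef, pf, pf]
  rw [this]
  apply total.congr_deriv
  have hLre : L = ((Real.log b : ℝ) : ℂ) := by rw [hLdef]; norm_num
  rw [hLre]
  push_cast
  ring

lemma Kf_zero_eq {b : ℝ} (hb : 0 < b) : Kf b 0 = ((Rf b : ℝ) : ℂ) := by
  rw [Kf, Rf]
  have h : ∀ x : ℝ, (Qf x : ℂ) * pf b (-0 - 2) x
      = ((Qf x * Real.exp (-2 * Real.log (x + b)) : ℝ) : ℂ) := by
    intro x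
    rw [pf, Complex.ofReal_mul, Complex.ofReal_exp]
    congr 1
    push_cast
    ring
  simp only [h]
  exact _root_.integral_ofReal

lemma abs_Rf_le {b : ℝ} (hb : 0 < b) : |Rf b| ≤ 8⁻¹ * b⁻¹ := by
  have hint : IntegrableOn (fun x : ℝ => 8⁻¹ * (x + b) ^ (-2 : ℝ)) (Ioi (0:ℝ)) :=
    (integrableOn_rpow_shift hb (by norm_num)).const_mul _
  have hbd : ∀ᵐ x ∂(volume.restrict (Ioi (0:ℝ))),
      ‖Qf x * Real.exp (-2 * Real.log (x + b))‖ ≤ 8⁻¹ * (x + b) ^ (-2 : ℝ) := by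
    refine (ae_restrict_iff' measurableSet_Ioi).mpr (.of_forall fun x hx => ?_)
    simp only [mem_Ioi] at hx
    have hxb : 0 < x + b := by linarith
    rw [Real.norm_eq_abs, abs_mul, _root_.abs_of_nonneg (Real.exp_pos _).le]
    · have he : Real.exp (-2 * Real.log (x + b)) = (x + b) ^ (-2 : ℝ) := by
        rw [Real.rpow_def_of_pos hxb]
        congr 1
        ring
      rw [he]
      exact mul_le_mul_of_nonneg_right (abs_Qf_le x) (by positivity)
  have := MeasureTheory.norm_integral_le_of_norm_le hint hbd
  rw [← Real.norm_eq_abs, Rf]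
  apply le_trans this
  rw [MeasureTheory.integral_const_mul]
  have hval : ∫ x in Ioi (0:ℝ), (x + b) ^ (-2 : ℝ) = b⁻¹ := by
    have hderiv : ∀ x ∈ Ici (0:ℝ), HasDerivAt (fun x : ℝ => -(x + b)⁻¹) ((x + b) ^ (-2:ℝ)) x := by
      intro x hx
      simp only [mem_Ici] at hx
      have hxb : 0 < x + b := by linarith
      have := ((hasDerivAt_id x).add_const b).inv hxb.ne'
      have h2 := this.neg
      apply h2.congr_deriv
      simp only [id_eq]
      rw [Real.rpow_neg hxb.le, ← Real.rpow_natCast (x + b) 2]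
      push_cast
      field_simp
    have htend : Tendsto (fun x : ℝ => -(x + b)⁻¹) atTop (𝓝 0) := by
      have : Tendsto (fun x : ℝ => x + b) atTop atTop := tendsto_atTop_add_const_right _ _ tendsto_id
      have h2 := (tendsto_inv_atTop_zero.comp this).neg
      simpa using h2
    have := MeasureTheory.integral_Ioi_of_hasDerivAt_of_tendsto' hderiv
      (integrableOn_rpow_shift hb (by norm_num)) htend
    rw [this]
    norm_num
  rw [hval]

lemma isOpen_V : IsOpen V := by
  have h1 : IsOpen {s : ℂ | -(1/2 : ℝ) < s.re} := isOpen_lt continuous_const Complex.continuous_re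
  have h2 : IsOpen {s : ℂ | s ≠ 1} := isOpen_ne
  exact h1.inter h2

lemma zero_mem_V : (0 : ℂ) ∈ V := by
  constructor
  · norm_num
  · norm_num

lemma two_mem_V : (2 : ℂ) ∈ V := by
  constructor
  · norm_num
  · intro h
    have := congrArg Complex.re h
    norm_num at this

lemma isPreconnected_V : IsPreconnected V := by
  have hC1 : Convex ℝ {s : ℂ | -(1/2 : ℝ) < s.re ∧ s.re < 1} :=
    (convex_halfSpace_re_gt _).inter (convex_halfSpace_re_lt _)
  have hC2 : Convex ℝ {s : ℂ | -(1/2 : ℝ) < s.re ∧ 0 < s.im} :=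
    (convex_halfSpace_re_gt _).inter (convex_halfSpace_im_gt _)
  have hC3 : Convex ℝ {s : ℂ | -(1/2 : ℝ) < s.re ∧ s.im < 0} :=
    (convex_halfSpace_re_gt _).inter (convex_halfSpace_im_lt _)
  have hC4 : Convex ℝ {s : ℂ | 1 < s.re} := convex_halfSpace_re_gt _
  have h12 : IsPreconnected ({s : ℂ | -(1/2 : ℝ) < s.re ∧ s.re < 1}
      ∪ {s : ℂ | -(1/2 : ℝ) < s.re ∧ 0 < s.im}) := by
    apply IsPreconnected.union (Complex.I)
    · exact ⟨by norm_num [Complex.I_re], by norm_num [Complex.I_re]⟩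
    · exact ⟨by norm_num [Complex.I_re], by norm_num [Complex.I_im]⟩
    · exact hC1.isPreconnected
    · exact hC2.isPreconnected
  have h124 : IsPreconnected (({s : ℂ | -(1/2 : ℝ) < s.re ∧ s.re < 1}
      ∪ {s : ℂ | -(1/2 : ℝ) < s.re ∧ 0 < s.im}) ∪ {s : ℂ | 1 < s.re}) := by
    apply IsPreconnected.union (2 + Complex.I)
    · right
      exact ⟨by norm_num [Complex.add_re, Complex.I_re], by norm_num [Complex.add_im, Complex.I_im]⟩
    · show (1:ℝ) < (2 + Complex.I).re
      norm_num [Complex.add_re, Complex.I_re]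
    · exact h12
    · exact hC4.isPreconnected
  have hall : IsPreconnected ((({s : ℂ | -(1/2 : ℝ) < s.re ∧ s.re < 1}
      ∪ {s : ℂ | -(1/2 : ℝ) < s.re ∧ 0 < s.im}) ∪ {s : ℂ | 1 < s.re})
      ∪ {s : ℂ | -(1/2 : ℝ) < s.re ∧ s.im < 0}) := by
    apply IsPreconnected.union (-Complex.I)
    · left; left
      exact ⟨by norm_num [Complex.neg_re, Complex.I_re], by norm_num [Complex.neg_re, Complex.I_re]⟩
    · exact ⟨by norm_num [Complex.neg_re, Complex.I_re], by norm_num [Complex.neg_im, Complex.I_im]⟩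
    · exact h124
    · exact hC3.isPreconnected
  have hVeq : V = (({s : ℂ | -(1/2 : ℝ) < s.re ∧ s.re < 1}
      ∪ {s : ℂ | -(1/2 : ℝ) < s.re ∧ 0 < s.im}) ∪ {s : ℂ | 1 < s.re})
      ∪ {s : ℂ | -(1/2 : ℝ) < s.re ∧ s.im < 0} := by
    ext s
    simp only [V, mem_union, mem_setOf_eq]
    constructor
    · rintro ⟨h1, h2⟩
      rcases lt_trichotomy s.im 0 with him | him | him
      · right; exact ⟨h1, him⟩
      · rcases lt_trichotomy s.re 1 with hre | hre | hre
        · left; left; left; exact ⟨h1, hre⟩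
        · exfalso; apply h2
          apply Complex.ext <;> simp [hre, him]
        · left; right; exact hre
      · left; left; right; exact ⟨h1, him⟩
    · rintro (((⟨h1, h2⟩ | ⟨h1, h2⟩) | h) | ⟨h1, h2⟩)
      · exact ⟨h1, fun he => by rw [he] at h2; norm_num at h2⟩
      · exact ⟨h1, fun he => by rw [he] at h2; norm_num at h2⟩
      · refine ⟨by norm_num; linarith, fun he => by rw [he] at h; norm_num at h⟩
      · exact ⟨h1, fun he => by rw [he] at h2; norm_num at h2⟩
  rw [hVeq]
  exact hall

/-- identity theorem on V -/
lemma eqOn_V {g h : ℂ → ℂ} (hg : ∀ s ∈ V, DifferentiableAt ℂ g s)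
    (hh : ∀ s ∈ V, DifferentiableAt ℂ h s)
    (heq : ∀ s : ℂ, 1 < s.re → g s = h s) : EqOn g h V := by
  have hg' : AnalyticOnNhd ℂ g V :=
    (DifferentiableOn.analyticOnNhd (fun s hs => (hg s hs).differentiableWithinAt) isOpen_V)
  have hh' : AnalyticOnNhd ℂ h V :=
    (DifferentiableOn.analyticOnNhd (fun s hs => (hh s hs).differentiableWithinAt) isOpen_V)
  apply hg'.eqOn_of_preconnected_of_eventuallyEq hh' isPreconnected_V two_mem_V
  have hopen : IsOpen {s : ℂ | 1 < s.re} := isOpen_lt continuous_const Complex.continuous_re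
  have hmem : {s : ℂ | 1 < s.re} ∈ 𝓝 (2 : ℂ) := hopen.mem_nhds (by norm_num)
  filter_upwards [hmem] with s hs
  exact heq s hs

lemma deriv_eq_of_eq_on_V {g h : ℂ → ℂ} (hg : ∀ s ∈ V, DifferentiableAt ℂ g s)
    (hh : ∀ s ∈ V, DifferentiableAt ℂ h s)
    (heq : ∀ s : ℂ, 1 < s.re → g s = h s) : deriv g 0 = deriv h 0 := by
  apply Filter.EventuallyEq.deriv_eq
  filter_upwards [isOpen_V.mem_nhds zero_mem_V] with s hs
  exact eqOn_V hg hh heq hs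

lemma tendsto_Rf (a : ℝ) (ha : 0 < a) :
    Tendsto (fun N : ℕ => Rf (a + N)) atTop (𝓝 0) := by
  have htend : Tendsto (fun N : ℕ => 8⁻¹ * (a + (N:ℝ))⁻¹) atTop (𝓝 0) := by
    have h1 : Tendsto (fun N : ℕ => a + (N:ℝ)) atTop atTop :=
      tendsto_atTop_add_const_left _ _ tendsto_natCast_atTop_atTop
    have := (tendsto_inv_atTop_zero.comp h1).const_mul (8⁻¹ : ℝ)
    simpa using this
  exact squeeze_zero_norm (fun N => abs_Rf_le (by positivity)) htend

lemma tendsto_log_one_plus_div (a : ℝ) :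
    Tendsto (fun N : ℕ => Real.log (1 + a / N)) atTop (𝓝 0) := by
  have h1 : Tendsto (fun N : ℕ => 1 + a / (N:ℝ)) atTop (𝓝 1) := by
    have := tendsto_const_div_atTop_nhds_zero_nat a
    simpa using (tendsto_const_nhds (x := (1:ℝ))).add this
  have h2 := ((Real.continuousAt_log (by norm_num : (1:ℝ) ≠ 0)).tendsto).comp h1
  simpa [Function.comp_def] using h2

lemma tendsto_main (a : ℝ) (ha : 0 < a) :
    Tendsto (fun N : ℕ => (a + N) * Real.log (a + N) - (a + N) - Real.log (a + N) / 2
        - Rf (a + N) - ∑ k ∈ Finset.range N, Real.log (a + k)) atTop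
      (𝓝 (Real.log (Real.Gamma a) - Real.log (2 * Real.pi) / 2)) := by
  -- Gamma sequence limit
  have hΓpos : 0 < Real.Gamma a := Real.Gamma_pos_of_pos ha
  have hG : Tendsto (fun N : ℕ => Real.log (Real.GammaSeq a N)) atTop
      (𝓝 (Real.log (Real.Gamma a))) :=
    ((Real.continuousAt_log hΓpos.ne').tendsto).comp (Real.GammaSeq_tendsto_Gamma a)
  -- Stirling
  have hW : Tendsto (fun N : ℕ => Real.log (Stirling.stirlingSeq N)) atTop
      (𝓝 (Real.log Real.pi / 2)) := by
    have h0 : Real.log (Real.sqrt Real.pi) = Real.log Real.pi / 2 :=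
      Real.log_sqrt Real.pi_pos.le
    rw [← h0]
    exact ((Real.continuousAt_log (by positivity : Real.sqrt Real.pi ≠ 0)).tendsto).comp
      Stirling.tendsto_stirlingSeq_sqrt_pi
  -- N log(1 + a/N) → a
  have hT1 : Tendsto (fun N : ℕ => (N : ℝ) * Real.log (1 + a / N)) atTop (𝓝 a) :=
    (Real.tendsto_mul_log_one_add_div_atTop a).comp tendsto_natCast_atTop_atTop
  have hT2 : Tendsto (fun N : ℕ => (a + 1/2) * Real.log (1 + a / N)) atTop (𝓝 0) := by
    simpa using (tendsto_log_one_plus_div a).const_mul (a + 1/2)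
  -- the combination
  have hcomb : Tendsto (fun N : ℕ =>
      ((N : ℝ) * Real.log (1 + a / N) + (a + 1/2) * Real.log (1 + a / N)) - a
      - Real.log (Stirling.stirlingSeq N) - Real.log 2 / 2
      + Real.log (Real.GammaSeq a N) - Rf (a + N)) atTop
      (𝓝 ((a + 0) - a - Real.log Real.pi / 2 - Real.log 2 / 2 + Real.log (Real.Gamma a) - 0)) := by
    exact ((((((hT1.add hT2)).sub_const a).sub hW).sub_const (Real.log 2 / 2)).add hG).sub
      (tendsto_Rf a ha)
  have htarget : ((a + 0) - a - Real.log Real.pi / 2 - Real.log 2 / 2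
      + Real.log (Real.Gamma a) - 0)
      = Real.log (Real.Gamma a) - Real.log (2 * Real.pi) / 2 := by
    rw [Real.log_mul (by norm_num) Real.pi_pos.ne']
    ring
  rw [htarget] at hcomb
  -- identify the sequences eventually
  apply hcomb.congr'
  filter_upwards [eventually_ge_atTop 1] with N hN
  have hN0 : (0:ℝ) < N := by exact_mod_cast hN
  have hNne : (N:ℝ) ≠ 0 := hN0.ne'
  have haN : (0:ℝ) < a + N := by positivity
  -- log (a + N) = log N + log (1 + a/N)
  have hlog1 : Real.log (a + N) = Real.log N + Real.log (1 + a / N) := by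
    rw [← Real.log_mul hNne (by positivity : (1 : ℝ) + a / N ≠ 0)]
    congr 1
    field_simp
    ring
  -- log N! from Stirling
  have hfact : Real.log ((Nat.factorial N : ℝ)) = Real.log (Stirling.stirlingSeq N) + Real.log 2 / 2
      + Real.log N / 2 + N * Real.log N - N := by
    have hs : Stirling.stirlingSeq N = ((Nat.factorial N : ℝ)) / (Real.sqrt (2 * N) * ((N : ℝ) / Real.exp 1) ^ N) := rfl
    have hpos1 : (0:ℝ) < Real.sqrt (2 * N) := Real.sqrt_pos.mpr (by positivity)
    have hpos2 : (0:ℝ) < ((N:ℝ) / Real.exp 1) ^ N := by positivity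
    have hfactpos : (0:ℝ) < ((Nat.factorial N : ℝ)) := by exact_mod_cast Nat.factorial_pos N
    rw [hs, Real.log_div hfactpos.ne' (by positivity), Real.log_mul hpos1.ne' hpos2.ne',
      Real.log_sqrt (by positivity), Real.log_mul (by norm_num) hNne,
      Real.log_pow, Real.log_div hNne (Real.exp_pos 1).ne', Real.log_exp]
    ring
  -- log GammaSeq
  have hGS : Real.log (Real.GammaSeq a N) = a * Real.log N + Real.log ((Nat.factorial N : ℝ))
      - (∑ k ∈ Finset.range N, Real.log (a + k) + Real.log (a + N)) := by
    have hprodpos : ∀ j ∈ Finset.range (N + 1), (0:ℝ) < a + j := fun j _ => by positivity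
    have hprod : (0:ℝ) < ∏ j ∈ Finset.range (N + 1), (a + (j:ℝ)) :=
      Finset.prod_pos hprodpos
    have hfactpos : (0:ℝ) < ((Nat.factorial N : ℝ)) := by exact_mod_cast Nat.factorial_pos N
    rw [Real.GammaSeq, Real.log_div (by positivity) hprod.ne',
      Real.log_mul (by positivity) hfactpos.ne', Real.log_rpow hN0]
    congr 1
    rw [Real.log_prod (fun j hj => (hprodpos j hj).ne')]
    rw [Finset.sum_range_succ]
  rw [hGS, hlog1, hfact]
  push_cast
  ring

lemma term_eq {r : ℝ} (hr : 0 < r) (s : ℂ) :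
    1 / ((r : ℂ)) ^ s = Complex.exp (-s * ((Real.log r : ℝ) : ℂ)) := by
  have hrne : (r : ℂ) ≠ 0 := Complex.ofReal_ne_zero.mpr hr.ne'
  rw [one_div, ← Complex.cpow_neg, Complex.cpow_def_of_ne_zero hrne,
    ← Complex.ofReal_log hr.le, mul_comm]

end LerchAux

open LerchAux Complex Set Filter Topology in

/-- Lerch's formula: ∂ζ/∂s(0, a) = log Γ(a) − (1/2) log(2π). -/
theorem hurwitzZeta_deriv_zero (a : ℝ) (ha : 0 < a) (F : ℂ → ℂ)
    (hF : ∀ s : ℂ, s ≠ 1 → DifferentiableAt ℂ F s)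
    (hF' : ∀ s : ℂ, 1 < s.re →
      HasSum (fun n : ℕ => 1 / ((n : ℂ) + (a : ℂ)) ^ s) (F s)) :
    deriv F 0 = (Real.log (Real.Gamma a) - Real.log (2 * Real.pi) / 2 : ℝ) := by
  have key : ∀ N : ℕ, deriv F 0 =
      (((a + N) * Real.log (a + N) - (a + N) - Real.log (a + N) / 2
        - Rf (a + N) - ∑ k ∈ Finset.range N, Real.log (a + k) : ℝ) : ℂ) := by
    intro N
    have hb : (0:ℝ) < a + N := by positivity
    set SN : ℂ → ℂ := fun s => ∑ k ∈ Finset.range N, pf a (-s) k with hSN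
    have hSNdiff : ∀ s : ℂ, DifferentiableAt ℂ SN s := by
      intro s
      apply DifferentiableAt.fun_sum
      intro k _
      exact (differentiableAt_id.neg.mul_const _).cexp
    have hSNderiv : HasDerivAt SN
        ((-(∑ k ∈ Finset.range N, Real.log (a + k)) : ℝ) : ℂ) 0 := by
      have h : ∀ k ∈ Finset.range N,
          HasDerivAt (fun s : ℂ => pf a (-s) k)
            (-(((Real.log (a + k) : ℝ)) : ℂ)) 0 := by
        intro k _
        have hlin : HasDerivAt (fun s : ℂ => (-s) * ((Real.log ((k:ℝ) + a) : ℝ) : ℂ))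
            (-(((Real.log ((k:ℝ) + a) : ℝ)) : ℂ)) 0 :=
          ((hasDerivAt_id 0).neg.mul_const _).congr_deriv (by ring)
        have hc := hlin.cexp
        simp only [pf]
        apply hc.congr_deriv
        rw [show (-(0:ℂ)) * ((Real.log ((k:ℝ) + a) : ℝ) : ℂ) = 0 by ring, Complex.exp_zero,
          show ((k:ℝ) + a) = (a + k) by ring]
        ring
      have hsum := HasDerivAt.fun_sum h
      apply hsum.congr_deriv
      push_cast
      rw [Finset.sum_neg_distrib]
    have heq : ∀ s : ℂ, 1 < s.re → F s - SN s = Ef (a + N) s := by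
      intro s hs
      have h0 := hF' s hs
      have hfun : (fun n : ℕ => 1 / ((n : ℂ) + (a : ℂ)) ^ s) = fun n : ℕ => pf a (-s) n := by
        funext n
        have h1 : ((n : ℂ) + (a : ℂ)) = (((n : ℝ) + a : ℝ) : ℂ) := by push_cast; ring
        rw [h1, term_eq (by positivity) s, pf]
      rw [hfun] at h0
      have h1 : HasSum (fun n : ℕ => pf a (-s) ((n + N : ℕ) : ℝ)) (F s - SN s) := by
        rw [hasSum_nat_add_iff (f := fun n : ℕ => pf a (-s) (n : ℝ)) N]
        simpa [hSN, sub_add_cancel] using h0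
      have hfun2 : (fun n : ℕ => pf a (-s) ((n + N : ℕ) : ℝ))
          = fun n : ℕ => pf (a + N) (-s) (n : ℝ) := by
        funext n
        simp only [pf]
        congr 2
        push_cast
        ring
      rw [hfun2] at h1
      exact h1.unique (hasSum_pf_Ef hb hs)
    -- deriv transfer
    have hGdiff : ∀ s ∈ V, DifferentiableAt ℂ (fun s => F s - SN s) s :=
      fun s hs => (hF s hs.2).sub (hSNdiff s)
    have hEdiff : ∀ s ∈ V, DifferentiableAt ℂ (Ef (a + N)) s :=
      fun s hs => differentiableAt_Ef hb hs.1 hs.2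
    have hEqOn := eqOn_V hGdiff hEdiff heq
    have hevent : (fun s => F s - SN s) =ᶠ[𝓝 0] Ef (a + N) := by
      filter_upwards [isOpen_V.mem_nhds zero_mem_V] with s hs
      exact hEqOn hs
    have hderivG : deriv (fun s => F s - SN s) 0 = deriv (Ef (a + N)) 0 := hevent.deriv_eq
    have hF0 : DifferentiableAt ℂ F 0 := hF 0 (by norm_num)
    have hsplit : deriv F 0 = deriv (fun s => F s - SN s) 0 + deriv SN 0 := by
      have : deriv (fun s : ℂ => (F s - SN s) + SN s) 0
          = deriv (fun s => F s - SN s) 0 + deriv SN 0 :=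
        deriv_add (hF0.sub (hSNdiff 0)) (hSNdiff 0)
      rw [← this]
      congr 1
      funext s
      ring
    rw [hsplit, hderivG, (hasDerivAt_Ef_zero hb).deriv, hSNderiv.deriv, Kf_zero_eq hb]
    push_cast
    ring
  have hconstlim : Tendsto (fun N : ℕ =>
      (((a + N) * Real.log (a + N) - (a + N) - Real.log (a + N) / 2
        - Rf (a + N) - ∑ k ∈ Finset.range N, Real.log (a + k) : ℝ) : ℂ)) atTop
      (𝓝 ((Real.log (Real.Gamma a) - Real.log (2 * Real.pi) / 2 : ℝ) : ℂ)) :=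
    (Complex.continuous_ofReal.tendsto _).comp (tendsto_main a ha)
  have hconst : Tendsto (fun _ : ℕ => deriv F 0) atTop (𝓝 (deriv F 0)) := tendsto_const_nhds
  have := tendsto_nhds_unique (hconst.congr (fun N => key N)) hconstlim
  exact this
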